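/- Let Z ~ Bernoulli(1/2), and suppose the conditional laws L(f(X₀)) and L(f(X₁)) of a model's output under Z=0 and Z=1 are mutually absolutely continuous with densities r = dL(f(X₀))/dL(f(X₁)). Then the following are equivalent: (i) for every measurable set D with positive probability, |log( P(Z=0 | Ŷ ∈ D) / P(Z=1 | Ŷ ∈ D) )| ≤ ε, where Ŷ is the output; (ii) e^{−ε} ≤ r ≤ e^{ε} almost surely. -/

import Mathlib

open MeasureTheory ProbabilityTheory
open scoped ENNReal ProbabilityTheory

noncomputable section

/-- Kullback–Leibler divergence between two measures. -/
def klDiv {α : Type*} [MeasurableSpace α] (P Q : Measure α) : ℝ≥0∞ :=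
  open Classical in
  if P ≪ Q ∧ Integrable (fun x => Real.log (P.rnDeriv Q x).toReal) P
  then ENNReal.ofReal (∫ x, Real.log (P.rnDeriv Q x).toReal ∂P) else ⊤

/-- Mutual information of `X` and `Z`: KL divergence of the joint law with respect to the
product of the marginal laws. -/
def mutualInfo {Ω α β : Type*} [MeasurableSpace Ω] [MeasurableSpace α] [MeasurableSpace β]
    (μ : Measure Ω) (X : Ω → α) (Z : Ω → β) : ℝ≥0∞ :=
  klDiv (μ.map fun ω => (X ω, Z ω)) ((μ.map X).prod (μ.map Z))

/-- Total variation distance between two measures. -/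
def tvDist {α : Type*} [MeasurableSpace α] (P Q : Measure α) : ℝ :=
  ⨆ s : Set α, |(P s).toReal - (Q s).toReal|

/-- With `Z ~ Bernoulli(1/2)` and mutually absolutely continuous conditional
output laws `P₀ = L(Ŷ|Z=0)`, `P₁ = L(Ŷ|Z=1)`, the ε-bounded posterior log-odds condition
(for all events `D` of positive probability) is equivalent to the Radon–Nikodym density ratio
`r = dP₀/dP₁` lying in `[e^{−ε}, e^{ε}]` almost surely. -/
theorem posterior_odds_iff_density_ratio
    {Ω 𝒴 : Type*} [MeasurableSpace Ω] [MeasurableSpace 𝒴]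
    (μ : Measure Ω) [IsProbabilityMeasure μ]
    (Z : Ω → Bool) (Yhat : Ω → 𝒴) (hZ : Measurable Z) (hY : Measurable Yhat)
    (hhalf : μ (Z ⁻¹' {false}) = 1/2) (ε : ℝ)
    (hAC0 : (μ[|Z ⁻¹' {false}]).map Yhat ≪ (μ[|Z ⁻¹' {true}]).map Yhat)
    (hAC1 : (μ[|Z ⁻¹' {true}]).map Yhat ≪ (μ[|Z ⁻¹' {false}]).map Yhat) :
    (∀ D : Set 𝒴, MeasurableSet D → μ (Yhat ⁻¹' D) ≠ 0 →
        |Real.log ((μ[|Yhat ⁻¹' D] (Z ⁻¹' {false})).toReal /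
            (μ[|Yhat ⁻¹' D] (Z ⁻¹' {true})).toReal)| ≤ ε) ↔
      (∀ᵐ y ∂((μ[|Z ⁻¹' {true}]).map Yhat),
        Real.exp (-ε) ≤
            (((μ[|Z ⁻¹' {false}]).map Yhat).rnDeriv ((μ[|Z ⁻¹' {true}]).map Yhat) y).toReal ∧
          (((μ[|Z ⁻¹' {false}]).map Yhat).rnDeriv
              ((μ[|Z ⁻¹' {true}]).map Yhat) y).toReal ≤ Real.exp ε) := by
  classical
  set A0 := Z ⁻¹' {false} with hA0def
  set A1 := Z ⁻¹' {true} with hA1def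
  have hA0m : MeasurableSet A0 := hZ (measurableSet_singleton _)
  have hA1c : A1 = A0ᶜ := by
    ext ω
    simp [hA0def, hA1def]
  have hμA1 : μ A1 = 1/2 := by
    rw [hA1c, measure_compl hA0m (measure_ne_top μ _), measure_univ, hhalf, one_div,
      ENNReal.one_sub_inv_two]
  have hμA0ne : μ A0 ≠ 0 := by rw [hhalf]; norm_num
  have hμA1ne : μ A1 ≠ 0 := by rw [hμA1]; norm_num
  have hc0 : IsProbabilityMeasure (μ[|A0]) := cond_isProbabilityMeasure hμA0ne
  have hc1 : IsProbabilityMeasure (μ[|A1]) := cond_isProbabilityMeasure hμA1ne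
  set P0 := (μ[|A0]).map Yhat with hP0def
  set P1 := (μ[|A1]).map Yhat with hP1def
  have hP0prob : IsProbabilityMeasure P0 := Measure.isProbabilityMeasure_map hY.aemeasurable
  have hP1prob : IsProbabilityMeasure P1 := Measure.isProbabilityMeasure_map hY.aemeasurable
  have hP0 : ∀ D : Set 𝒴, MeasurableSet D → P0 D = 2 * μ (Yhat ⁻¹' D ∩ A0) := by
    intro D hD
    rw [hP0def, Measure.map_apply hY hD, cond_apply hA0m μ, hhalf, Set.inter_comm]
    norm_num
  have hP1 : ∀ D : Set 𝒴, MeasurableSet D → P1 D = 2 * μ (Yhat ⁻¹' D ∩ A1) := by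
    intro D hD
    rw [hP1def, Measure.map_apply hY hD, cond_apply (hA1c ▸ hA0m.compl) μ, hμA1, Set.inter_comm]
    norm_num
  have hsplit : ∀ S : Set Ω, μ S = μ (S ∩ A0) + μ (S ∩ A1) := by
    intro S
    rw [hA1c, ← Set.diff_eq, measure_inter_add_diff S hA0m]
  have hzero : ∀ D : Set 𝒴, MeasurableSet D → (P1 D = 0 ↔ μ (Yhat ⁻¹' D) = 0) := by
    intro D hD
    constructor
    · intro h1
      have h0 : P0 D = 0 := hAC0 h1
      rw [hP0 D hD] at h0
      rw [hP1 D hD] at h1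
      rw [hsplit (Yhat ⁻¹' D)]
      simp only [mul_eq_zero] at h0 h1
      have e0 : μ (Yhat ⁻¹' D ∩ A0) = 0 := by simpa using h0
      have e1 : μ (Yhat ⁻¹' D ∩ A1) = 0 := by simpa using h1
      rw [e0, e1, add_zero]
    · intro hS
      rw [hP1 D hD]
      have : μ (Yhat ⁻¹' D ∩ A1) = 0 :=
        le_antisymm (le_trans (measure_mono Set.inter_subset_left) hS.le) zero_le
      rw [this, mul_zero]
  -- the key rewriting of the posterior odds ratio
  have hlogeq : ∀ D : Set 𝒴, MeasurableSet D → μ (Yhat ⁻¹' D) ≠ 0 →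
      (μ[|Yhat ⁻¹' D] A0).toReal / (μ[|Yhat ⁻¹' D] A1).toReal
        = (P0 D).toReal / (P1 D).toReal := by
    intro D hD hS
    have hSm : MeasurableSet (Yhat ⁻¹' D) := hY hD
    rw [cond_apply hSm μ, cond_apply hSm μ, hP0 D hD, hP1 D hD]
    rw [ENNReal.toReal_mul, ENNReal.toReal_mul, ENNReal.toReal_mul, ENNReal.toReal_mul]
    have hinv : ((μ (Yhat ⁻¹' D))⁻¹).toReal ≠ 0 := by
      rw [ENNReal.toReal_inv]
      exact inv_ne_zero (ENNReal.toReal_ne_zero.2 ⟨hS, measure_ne_top μ _⟩)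
    rw [mul_div_mul_left _ _ hinv, mul_div_mul_left _ _ (by norm_num : ((2:ℝ≥0∞)).toReal ≠ 0)]
  constructor
  · -- (i) → (ii)
    intro h
    have hratio : ∀ D : Set 𝒴, MeasurableSet D → P1 D ≠ 0 →
        Real.exp (-ε) * (P1 D).toReal ≤ (P0 D).toReal ∧
          (P0 D).toReal ≤ Real.exp ε * (P1 D).toReal := by
      intro D hD h1
      have hS : μ (Yhat ⁻¹' D) ≠ 0 := fun hS => h1 ((hzero D hD).2 hS)
      have h0 : P0 D ≠ 0 := fun h0 => h1 (hAC1 h0)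
      have ha : 0 < (P0 D).toReal := ENNReal.toReal_pos h0 (measure_ne_top _ _)
      have hb : 0 < (P1 D).toReal := ENNReal.toReal_pos h1 (measure_ne_top _ _)
      have hlog := h D hD hS
      rw [hlogeq D hD hS] at hlog
      rw [abs_le] at hlog
      constructor
      · have := (Real.le_log_iff_exp_le (div_pos ha hb)).1 hlog.1
        calc Real.exp (-ε) * (P1 D).toReal
            ≤ (P0 D).toReal / (P1 D).toReal * (P1 D).toReal := by
              exact mul_le_mul_of_nonneg_right this hb.le
          _ = (P0 D).toReal := div_mul_cancel₀ _ hb.ne'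
      · have := (Real.log_le_iff_le_exp (div_pos ha hb)).1 hlog.2
        calc (P0 D).toReal = (P0 D).toReal / (P1 D).toReal * (P1 D).toReal :=
              (div_mul_cancel₀ _ hb.ne').symm
          _ ≤ Real.exp ε * (P1 D).toReal := mul_le_mul_of_nonneg_right this hb.le
    have hub : P0.rnDeriv P1 ≤ᵐ[P1] fun _ => ENNReal.ofReal (Real.exp ε) := by
      refine ae_le_of_forall_setLIntegral_le_of_sigmaFinite
        (Measure.measurable_rnDeriv _ _) fun s hs _ => ?_
      rw [Measure.setLIntegral_rnDeriv' hAC0 hs, setLIntegral_const]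
      by_cases h1 : P1 s = 0
      · rw [hAC0 h1, h1, mul_zero]
      · have h2 := (hratio s hs h1).2
        calc P0 s = ENNReal.ofReal (P0 s).toReal :=
              (ENNReal.ofReal_toReal (measure_ne_top _ _)).symm
          _ ≤ ENNReal.ofReal (Real.exp ε * (P1 s).toReal) := ENNReal.ofReal_le_ofReal h2
          _ = ENNReal.ofReal (Real.exp ε) * P1 s := by
              rw [ENNReal.ofReal_mul (Real.exp_nonneg _),
                ENNReal.ofReal_toReal (measure_ne_top _ _)]
    have hlb : (fun _ => ENNReal.ofReal (Real.exp (-ε))) ≤ᵐ[P1] P0.rnDeriv P1 := by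
      refine ae_le_of_forall_setLIntegral_le_of_sigmaFinite measurable_const fun s hs _ => ?_
      rw [Measure.setLIntegral_rnDeriv' hAC0 hs, setLIntegral_const]
      by_cases h1 : P1 s = 0
      · rw [h1, mul_zero]; exact zero_le
      · have h2 := (hratio s hs h1).1
        calc ENNReal.ofReal (Real.exp (-ε)) * P1 s
            = ENNReal.ofReal (Real.exp (-ε) * (P1 s).toReal) := by
              rw [ENNReal.ofReal_mul (Real.exp_nonneg _),
                ENNReal.ofReal_toReal (measure_ne_top _ _)]
          _ ≤ ENNReal.ofReal (P0 s).toReal := ENNReal.ofReal_le_ofReal h2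
          _ = P0 s := ENNReal.ofReal_toReal (measure_ne_top _ _)
    filter_upwards [hub, hlb, Measure.rnDeriv_lt_top P0 P1] with y h1 h2 h3
    constructor
    · have := ENNReal.toReal_mono h3.ne h2
      rwa [ENNReal.toReal_ofReal (Real.exp_nonneg _)] at this
    · have := ENNReal.toReal_mono ENNReal.ofReal_ne_top h1
      rwa [ENNReal.toReal_ofReal (Real.exp_nonneg _)] at this
  · -- (ii) → (i)
    intro hae D hD hS
    have h1 : P1 D ≠ 0 := fun h1 => hS ((hzero D hD).1 h1)
    have hub : P0 D ≤ ENNReal.ofReal (Real.exp ε) * P1 D := by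
      rw [← Measure.setLIntegral_rnDeriv' hAC0 hD, ← setLIntegral_const]
      refine lintegral_mono_ae (ae_restrict_of_ae ?_)
      filter_upwards [hae, Measure.rnDeriv_lt_top P0 P1] with y hy hlt
      rw [← ENNReal.ofReal_toReal hlt.ne]
      exact ENNReal.ofReal_le_ofReal hy.2
    have hlb : ENNReal.ofReal (Real.exp (-ε)) * P1 D ≤ P0 D := by
      rw [← Measure.setLIntegral_rnDeriv' hAC0 hD, ← setLIntegral_const]
      refine lintegral_mono_ae (ae_restrict_of_ae ?_)
      filter_upwards [hae] with y hy
      exact ENNReal.ofReal_le_of_le_toReal hy.1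
    have h0 : P0 D ≠ 0 := fun h0 => h1 (hAC1 h0)
    have ha : 0 < (P0 D).toReal := ENNReal.toReal_pos h0 (measure_ne_top _ _)
    have hb : 0 < (P1 D).toReal := ENNReal.toReal_pos h1 (measure_ne_top _ _)
    have hub' : (P0 D).toReal ≤ Real.exp ε * (P1 D).toReal := by
      have := ENNReal.toReal_mono
        (ENNReal.mul_ne_top ENNReal.ofReal_ne_top (measure_ne_top _ _)) hub
      rwa [ENNReal.toReal_mul, ENNReal.toReal_ofReal (Real.exp_nonneg _)] at this
    have hlb' : Real.exp (-ε) * (P1 D).toReal ≤ (P0 D).toReal := by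
      have := ENNReal.toReal_mono (measure_ne_top _ _) hlb
      rwa [ENNReal.toReal_mul, ENNReal.toReal_ofReal (Real.exp_nonneg _)] at this
    rw [hlogeq D hD hS, abs_le]
    constructor
    · rw [Real.le_log_iff_exp_le (div_pos ha hb), le_div_iff₀ hb]
      exact hlb'
    · rw [Real.log_le_iff_le_exp (div_pos ha hb), div_le_iff₀ hb]
      exact hub'
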